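/- Let N ≥ 7, J ≥ 1, and F(σ) = |σ|^{4/(N−2)}σ. There is a constant C = C(N,J) such that for all reals y₁,…,y_J, h: |F(h + Σⱼyⱼ) − ΣⱼF(yⱼ) − ((N+2)/(N−2))Σⱼ|yⱼ|^{4/(N−2)}h − F(h)| ≤ C(Σ_{j<k} min(|yⱼ|^{4/(N−2)}|y_k|, |y_k|^{4/(N−2)}|yⱼ|) + |h|^{(N+1)/(N−2)} Σⱼ|yⱼ|^{1/(N−2)}). -/

import Mathlib

set_option maxHeartbeats 1000000

open Real Finset Filter

section Helpers

private lemma real_rpow_add_le {x z p : ℝ} (hx : 0 ≤ x) (hz : 0 ≤ z) (hp : 0 ≤ p) (hp1 : p ≤ 1) :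
    (x + z) ^ p ≤ x ^ p + z ^ p := by
  have := NNReal.rpow_add_le_add_rpow x.toNNReal z.toNNReal hp hp1
  have h2 := NNReal.coe_le_coe.2 this
  push_cast at h2
  rwa [Real.coe_toNNReal x hx, Real.coe_toNNReal z hz] at h2

private lemma abs_rpow_sub_le {q : ℝ} (hq0 : 0 ≤ q) (hq1 : q ≤ 1) :
    ∀ {a b : ℝ}, 0 ≤ a → 0 ≤ b → |a ^ q - b ^ q| ≤ |a - b| ^ q := by
  have key : ∀ {a b : ℝ}, 0 ≤ b → b ≤ a → |a ^ q - b ^ q| ≤ |a - b| ^ q := by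
    intro a b hb hba
    have ha : 0 ≤ a := hb.trans hba
    have h1 : a ^ q ≤ b ^ q + (a - b) ^ q := by
      have := real_rpow_add_le hb (sub_nonneg.2 hba) hq0 hq1
      rwa [add_sub_cancel] at this
    have h2 : b ^ q ≤ a ^ q := Real.rpow_le_rpow hb hba hq0
    rw [abs_of_nonneg (sub_nonneg.2 h2), abs_of_nonneg (sub_nonneg.2 hba)]
    linarith
  intro a b ha hb
  rcases le_total b a with hba | hab
  · exact key hb hba
  · rw [abs_sub_comm, abs_sub_comm a b]; exact key ha hab

private lemma weight_shift {Z H a c b d : ℝ} (hZ : 0 ≤ Z) (hZH : Z ≤ H) (hc : 0 ≤ c) (hca : c ≤ a)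
    (hb : 0 ≤ b) (hsum : a + b = c + d) : Z ^ a * H ^ b ≤ Z ^ c * H ^ d := by
  have hH : 0 ≤ H := hZ.trans hZH
  have hd : 0 ≤ d := by nlinarith
  rcases hZ.eq_or_lt with hZ0 | hZpos
  · rcases hc.eq_or_lt with hc0 | hcpos
    · rcases (hc0 ▸ hca : (0:ℝ) ≤ a).eq_or_lt with ha0 | hapos
      · have hbd : b = d := by rw [← hc0] at hsum; rw [← ha0] at hsum; linarith
        rw [← ha0, ← hc0, hbd]
      · rw [← hZ0, Real.zero_rpow hapos.ne']
        have : (0:ℝ) ^ c * H ^ d = H ^ d := by rw [← hc0, Real.rpow_zero, one_mul]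
        rw [this, zero_mul]
        positivity
    · have hapos : 0 < a := lt_of_lt_of_le hcpos hca
      rw [← hZ0, Real.zero_rpow hapos.ne', Real.zero_rpow hcpos.ne', zero_mul, zero_mul]
  · have hHpos : 0 < H := lt_of_lt_of_le hZpos hZH
    have h1 : Z ^ a = Z ^ c * Z ^ (a - c) := by
      rw [← Real.rpow_add hZpos]; ring_nf
    have h2 : Z ^ (a - c) ≤ H ^ (a - c) := Real.rpow_le_rpow hZ hZH (by linarith)
    have h3 : H ^ (a - c) * H ^ b = H ^ d := by
      rw [← Real.rpow_add hHpos]; congr 1; linarith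
    calc Z ^ a * H ^ b = Z ^ c * (Z ^ (a - c) * H ^ b) := by rw [h1]; ring
      _ ≤ Z ^ c * (H ^ (a - c) * H ^ b) := by
          apply mul_le_mul_of_nonneg_left _ (Real.rpow_nonneg hZ c)
          exact mul_le_mul_of_nonneg_right h2 (Real.rpow_nonneg hH b)
      _ = Z ^ c * H ^ d := by rw [h3]

private lemma two_rpow_bound {x z s : ℝ} (hx : 0 ≤ x) (hz : 0 ≤ z) (hs : 0 ≤ s) :
    (x + z) ^ s ≤ 2 ^ s * (x ^ s + z ^ s) := by
  have h1 : x + z ≤ 2 * max x z := by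
    rcases le_total x z with h | h
    · simp [max_eq_right h]; linarith
    · simp [max_eq_left h]; linarith
  have h2 : (x + z) ^ s ≤ (2 * max x z) ^ s :=
    Real.rpow_le_rpow (by linarith) h1 hs
  have h3 : (2 * max x z) ^ s = 2 ^ s * (max x z) ^ s :=
    Real.mul_rpow (by norm_num) (le_max_iff.2 (Or.inl hx))
  have h4 : (max x z) ^ s ≤ x ^ s + z ^ s := by
    rcases le_total x z with h | h
    · rw [max_eq_right h]
      have := Real.rpow_nonneg hx s
      linarith
    · rw [max_eq_left h]
      have := Real.rpow_nonneg hz s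
      linarith
  calc (x + z) ^ s ≤ 2 ^ s * (max x z) ^ s := by rw [← h3]; exact h2
    _ ≤ 2 ^ s * (x ^ s + z ^ s) := by
        apply mul_le_mul_of_nonneg_left h4 (Real.rpow_nonneg (by norm_num) s)

private lemma hasDerivAt_absq {q : ℝ} (hq : 0 < q) (s : ℝ) :
    HasDerivAt (fun t : ℝ => |t| ^ q * t) ((1 + q) * |s| ^ q) s := by
  rcases lt_trichotomy s 0 with hs | rfl | hs
  · have hne : (-s : ℝ) ≠ 0 := ne_of_gt (neg_pos.2 hs)
    have h1 : HasDerivAt (fun t : ℝ => (-t) ^ (q + 1)) (((q + 1) * (-s) ^ (q + 1 - 1)) * (-1)) s := by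
      exact (Real.hasDerivAt_rpow_const (p := q + 1) (Or.inl hne)).comp s (hasDerivAt_neg s)
    have h2 : HasDerivAt (fun t : ℝ => -((-t) ^ (q + 1))) ((1 + q) * |s| ^ q) s := by
      have : HasDerivAt (fun t : ℝ => -((-t) ^ (q + 1))) _ s := h1.neg
      convert this using 1
      rw [abs_of_neg hs]
      rw [add_sub_cancel_right]
      ring
    apply h2.congr_of_eventuallyEq
    filter_upwards [eventually_lt_nhds hs] with t ht
    rw [abs_of_neg ht, Real.rpow_add_one (ne_of_gt (neg_pos.2 ht))]
    ring
  · rw [hasDerivAt_iff_tendsto_slope]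
    have habs : Tendsto (fun t : ℝ => |t| ^ q) (nhdsWithin 0 {(0:ℝ)}ᶜ) (nhds 0) := by
      have h1 : Tendsto (fun t : ℝ => |t|) (nhds (0:ℝ)) (nhds 0) := by
        simpa using continuous_abs.tendsto (0:ℝ)
      have h2 : Tendsto (fun u : ℝ => u ^ q) (nhds (0:ℝ)) (nhds 0) := by
        have := (Real.continuousAt_rpow_const 0 q (Or.inr hq.le)).tendsto
        rwa [Real.zero_rpow hq.ne'] at this
      exact (h2.comp h1).mono_left nhdsWithin_le_nhds
    have : (1 + q) * |(0:ℝ)| ^ q = 0 := by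
      rw [abs_zero, Real.zero_rpow hq.ne', mul_zero]
    rw [this]
    apply habs.congr'
    filter_upwards [self_mem_nhdsWithin] with t ht
    have ht' : t ≠ 0 := ht
    rw [slope_def_field]
    simp only [abs_zero, Real.zero_rpow hq.ne', mul_zero, zero_mul]
    rw [sub_zero, sub_zero, mul_div_assoc, div_self ht', mul_one]
  · have h1 : HasDerivAt (fun t : ℝ => t ^ (q + 1)) ((q + 1) * s ^ (q + 1 - 1)) s :=
      Real.hasDerivAt_rpow_const (p := q + 1) (Or.inl hs.ne')
    have h2 : HasDerivAt (fun t : ℝ => t ^ (q + 1)) ((1 + q) * |s| ^ q) s := by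
      convert h1 using 1
      rw [abs_of_pos hs, add_sub_cancel_right]
      ring
    apply h2.congr_of_eventuallyEq
    filter_upwards [eventually_gt_nhds hs] with t ht
    rw [abs_of_pos ht, Real.rpow_add_one ht.ne']

private lemma taylor_absq {q : ℝ} (hq0 : 0 < q) (hq1 : q ≤ 1) (u v : ℝ) :
    |(|u| ^ q * u) - (|v| ^ q * v) - (1 + q) * |v| ^ q * (u - v)|
      ≤ (1 + q) * |u - v| ^ (1 + q) := by
  set g : ℝ → ℝ := fun t => |t| ^ q * t - (1 + q) * |v| ^ q * t with hgdef
  have hg : ∀ t : ℝ, HasDerivAt g ((1 + q) * |t| ^ q - (1 + q) * |v| ^ q) t := by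
    intro t
    exact (hasDerivAt_absq hq0 t).sub
      (((hasDerivAt_id t).const_mul ((1 + q) * |v| ^ q)).congr_deriv (by ring))
  have hseg : ∀ t ∈ Set.uIcc v u, |t - v| ≤ |u - v| := by
    intro t ht
    rcases le_total v u with hvu | huv
    · rw [Set.uIcc_of_le hvu] at ht
      rw [abs_of_nonneg (by linarith [ht.1] : (0:ℝ) ≤ t - v),
        abs_of_nonneg (by linarith : (0:ℝ) ≤ u - v)]
      linarith [ht.2]
    · rw [Set.uIcc_of_ge huv] at ht
      rw [abs_of_nonpos (by linarith [ht.2] : t - v ≤ 0),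
        abs_of_nonpos (by linarith : u - v ≤ 0)]
      linarith [ht.1]
  have bound : ∀ t ∈ Set.uIcc v u,
      ‖(1 + q) * |t| ^ q - (1 + q) * |v| ^ q‖ ≤ (1 + q) * |u - v| ^ q := by
    intro t ht
    rw [Real.norm_eq_abs, ← mul_sub, abs_mul, abs_of_nonneg (by linarith : (0:ℝ) ≤ 1 + q)]
    apply mul_le_mul_of_nonneg_left _ (by linarith : (0:ℝ) ≤ 1 + q)
    calc |(|t| ^ q - |v| ^ q)| ≤ |(|t| - |v|)| ^ q :=
          abs_rpow_sub_le hq0.le hq1 (abs_nonneg t) (abs_nonneg v)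
      _ ≤ |t - v| ^ q :=
          Real.rpow_le_rpow (abs_nonneg _) (abs_abs_sub_abs_le_abs_sub t v) hq0.le
      _ ≤ |u - v| ^ q := Real.rpow_le_rpow (abs_nonneg _) (hseg t ht) hq0.le
  have key := (convex_uIcc v u).norm_image_sub_le_of_norm_hasDerivWithin_le
    (fun t _ => (hg t).hasDerivWithinAt) bound Set.left_mem_uIcc Set.right_mem_uIcc
  rw [Real.norm_eq_abs, Real.norm_eq_abs] at key
  have hgu : g u - g v = (|u| ^ q * u) - (|v| ^ q * v) - (1 + q) * |v| ^ q * (u - v) := by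
    simp only [hgdef]; ring
  rw [hgu] at key
  calc |(|u| ^ q * u) - (|v| ^ q * v) - (1 + q) * |v| ^ q * (u - v)|
      ≤ (1 + q) * |u - v| ^ q * |u - v| := key
    _ = (1 + q) * |u - v| ^ (1 + q) := by
        rcases eq_or_ne (u - v) 0 with h0 | h0
        · rw [h0, abs_zero, Real.zero_rpow (by linarith : (1:ℝ) + q ≠ 0), Real.zero_rpow hq0.ne']
          ring
        · rw [mul_assoc, ← Real.rpow_add_one (abs_ne_zero.2 h0)]
          rw [add_comm q 1]

end Helpers

/-- The energy-critical nonlinearity `F(σ) = |σ|^{4/(N-2)} σ`. -/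
noncomputable def F (N : ℕ) (s : ℝ) : ℝ := |s| ^ ((4 : ℝ) / ((N : ℝ) - 2)) * s

theorem pointwise_nonlinearity_expansion (N : ℕ) (hN : 7 ≤ N) (J : ℕ) (hJ : 1 ≤ J) :
    ∃ C > 0, ∀ (y : Fin J → ℝ) (h : ℝ),
      |F N (h + ∑ j, y j) - (∑ j, F N (y j))
        - ((N : ℝ) + 2) / ((N : ℝ) - 2) * (∑ j, |y j| ^ ((4 : ℝ) / ((N : ℝ) - 2))) * h
        - F N h|
      ≤ C * ((∑ p ∈ Finset.univ.filter (fun p : Fin J × Fin J => p.1 < p.2),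
              min (|y p.1| ^ ((4 : ℝ) / ((N : ℝ) - 2)) * |y p.2|)
                  (|y p.2| ^ ((4 : ℝ) / ((N : ℝ) - 2)) * |y p.1|))
          + |h| ^ (((N : ℝ) + 1) / ((N : ℝ) - 2)) *
              ∑ j, |y j| ^ ((1 : ℝ) / ((N : ℝ) - 2))) := by
  classical
  have hn7 : (7:ℝ) ≤ (N:ℝ) := by exact_mod_cast hN
  have hn2 : (5:ℝ) ≤ (N:ℝ) - 2 := by linarith
  have hn2pos : (0:ℝ) < (N:ℝ) - 2 := by linarith
  set q : ℝ := 4 / ((N:ℝ) - 2) with hqdef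
  set r : ℝ := 1 / ((N:ℝ) - 2) with hrdef
  have hq0 : 0 < q := by rw [hqdef]; positivity
  have hq1 : q ≤ 1 := by rw [hqdef, div_le_one hn2pos]; linarith
  have hr0 : 0 < r := by rw [hrdef]; positivity
  have hrq : r ≤ q := by
    rw [hqdef, hrdef]
    rw [div_le_div_iff₀ hn2pos hn2pos]
    nlinarith
  have hr1 : r ≤ 1 := hrq.trans hq1
  set e : ℝ := 1 + q - r with hedef
  have he0 : 0 < e := by rw [hedef]; linarith
  have hE : ((N:ℝ)+1)/((N:ℝ)-2) = e := by
    rw [hedef, hqdef, hrdef]; field_simp; ring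
  have hP : ((N:ℝ)+2)/((N:ℝ)-2) = 1 + q := by
    rw [hqdef]; field_simp; ring
  have hFq : ∀ s : ℝ, F N s = |s| ^ q * s := fun s => rfl
  -- auxiliary scalar facts
  have hsplit1 : ∀ x : ℝ, 0 ≤ x → x ^ q * x = x ^ (1 + q) := by
    intro x hx
    rcases hx.eq_or_lt with h0 | h0
    · rw [← h0, Real.zero_rpow hq0.ne', Real.zero_rpow (by linarith : (1:ℝ) + q ≠ 0), zero_mul]
    · rw [add_comm, Real.rpow_add_one h0.ne']
  have habsF : ∀ s : ℝ, |F N s| = |s| ^ q * |s| := by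
    intro s
    rw [hFq, abs_mul, abs_of_nonneg (Real.rpow_nonneg (abs_nonneg s) q)]
  refine ⟨64 * ((J:ℝ) + 1), by positivity, ?_⟩
  intro y h
  rw [hP, hE]
  set S1 : ℝ := ∑ p ∈ Finset.univ.filter (fun p : Fin J × Fin J => p.1 < p.2),
              min (|y p.1| ^ q * |y p.2|) (|y p.2| ^ q * |y p.1|) with hS1def
  set S2 : ℝ := |h| ^ e * ∑ j, |y j| ^ r with hS2def
  have hS1nonneg : 0 ≤ S1 := by
    apply Finset.sum_nonneg
    intro p _
    exact le_min (by positivity) (by positivity)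
  have hS2nonneg : 0 ≤ S2 := by rw [hS2def]; positivity
  have hCS : ∀ K : ℝ, 0 ≤ K → K ≤ 64 * ((J:ℝ) + 1) → ∀ X : ℝ,
      X ≤ K * S2 → X ≤ 64 * ((J:ℝ) + 1) * (S1 + S2) := by
    intro K hK hKC X hX
    calc X ≤ K * S2 := hX
      _ ≤ 64 * ((J:ℝ) + 1) * S2 := mul_le_mul_of_nonneg_right hKC hS2nonneg
      _ ≤ 64 * ((J:ℝ) + 1) * (S1 + S2) := by nlinarith
  -- the `t`-function
  set t : Fin J → ℝ := fun j => |h| ^ e * |y j| ^ r with htdef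
  have htnonneg : ∀ j, 0 ≤ t j := fun j => by rw [htdef]; positivity
  have htsum : ∑ j, t j = S2 := by rw [htdef, hS2def, ← Finset.mul_sum]
  -- pick the maximal bubble
  obtain ⟨j₀, -, hj₀⟩ := Finset.exists_max_image (univ : Finset (Fin J))
    (fun j => |y j|) ⟨⟨0, hJ⟩, mem_univ _⟩
  have hjmax : ∀ j, |y j| ≤ |y j₀| := fun j => hj₀ j (mem_univ j)
  have hJq : (J:ℝ) ^ q ≤ (J:ℝ) := by
    have h1 : (1:ℝ) ≤ (J:ℝ) := by exact_mod_cast hJ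
    calc (J:ℝ) ^ q ≤ (J:ℝ) ^ (1:ℝ) := Real.rpow_le_rpow_of_exponent_le h1 hq1
      _ = (J:ℝ) := Real.rpow_one _
  have hJnonneg : (0:ℝ) ≤ (J:ℝ) := Nat.cast_nonneg J
  rcases le_total (|y j₀|) (|h|) with hcase | hcase
  · -- CASE 1 : all bubbles dominated by h
    have hyh : ∀ j, |y j| ≤ |h| := fun j => (hjmax j).trans hcase
    have t1 : ∀ j, |h| ^ q * |y j| ≤ t j := by
      intro j
      have hw := weight_shift (Z := |y j|) (H := |h|) (a := 1) (c := r) (b := q) (d := e)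
        (abs_nonneg _) (hyh j) hr0.le hr1 hq0.le (by rw [hedef]; ring)
      calc |h| ^ q * |y j| = |y j| ^ (1:ℝ) * |h| ^ q := by rw [Real.rpow_one]; ring
        _ ≤ |y j| ^ r * |h| ^ e := hw
        _ = t j := by rw [htdef]; ring
    have t2 : ∀ j, |y j| ^ q * |y j| ≤ t j := by
      intro j
      have hw := weight_shift (Z := |y j|) (H := |h|) (a := 1 + q) (c := r) (b := 0) (d := e)
        (abs_nonneg _) (hyh j) hr0.le (by linarith) le_rfl (by rw [hedef]; ring)
      calc |y j| ^ q * |y j| = |y j| ^ (1 + q) * |h| ^ (0:ℝ) := by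
            rw [hsplit1 _ (abs_nonneg _), Real.rpow_zero, mul_one]
        _ ≤ |y j| ^ r * |h| ^ e := hw
        _ = t j := by rw [htdef]; ring
    have t3 : ∀ j, |y j| ^ q * |h| ≤ t j := by
      intro j
      have hw := weight_shift (Z := |y j|) (H := |h|) (a := q) (c := r) (b := 1) (d := e)
        (abs_nonneg _) (hyh j) hr0.le hrq (by norm_num) (by rw [hedef]; ring)
      calc |y j| ^ q * |h| = |y j| ^ q * |h| ^ (1:ℝ) := by rw [Real.rpow_one]
        _ ≤ |y j| ^ r * |h| ^ e := hw
        _ = t j := by rw [htdef]; ring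
    -- Taylor expansion around h
    have hTay := taylor_absq hq0 hq1 (h + ∑ j, y j) h
    rw [add_sub_cancel_left] at hTay
    have hYabs : |∑ j, y j| ≤ ∑ j, |y j| := Finset.abs_sum_le_sum_abs _ _
    have hTsum_nonneg : (0:ℝ) ≤ ∑ j, |y j| := Finset.sum_nonneg fun j _ => abs_nonneg _
    have hT : ∑ j, |y j| ≤ (J:ℝ) * |h| := by
      calc ∑ j, |y j| ≤ ∑ _j : Fin J, |h| := Finset.sum_le_sum fun j _ => hyh j
        _ = (J:ℝ) * |h| := by
            rw [Finset.sum_const, Finset.card_univ, Fintype.card_fin, nsmul_eq_mul]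
    have hYq : |∑ j, y j| ^ (1 + q) ≤ (J:ℝ) ^ q * ∑ j, (|h| ^ q * |y j|) := by
      calc |∑ j, y j| ^ (1 + q) ≤ (∑ j, |y j|) ^ (1 + q) :=
            Real.rpow_le_rpow (abs_nonneg _) hYabs (by linarith)
        _ = (∑ j, |y j|) ^ q * (∑ j, |y j|) := (hsplit1 _ hTsum_nonneg).symm
        _ ≤ ((J:ℝ) * |h|) ^ q * (∑ j, |y j|) :=
            mul_le_mul_of_nonneg_right
              (Real.rpow_le_rpow hTsum_nonneg hT hq0.le) hTsum_nonneg
        _ = (J:ℝ) ^ q * (|h| ^ q * ∑ j, |y j|) := by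
            rw [Real.mul_rpow hJnonneg (abs_nonneg _)]; ring
        _ = (J:ℝ) ^ q * ∑ j, (|h| ^ q * |y j|) := by rw [Finset.mul_sum]
    have tri : ∀ a b c d : ℝ, |a + b + c + d| ≤ |a| + |b| + |c| + |d| := by
      intro a b c d
      calc |a + b + c + d| ≤ |a + b + c| + |d| := abs_add_le _ _
        _ ≤ (|a + b| + |c|) + |d| := by gcongr; exact abs_add_le _ _
        _ ≤ ((|a| + |b|) + |c|) + |d| := by gcongr; exact abs_add_le _ _
    have hXsplit : F N (h + ∑ j, y j) - (∑ j, F N (y j)) - (1 + q) * (∑ j, |y j| ^ q) * h - F N h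
        = (F N (h + ∑ j, y j) - F N h - (1 + q) * |h| ^ q * (∑ j, y j))
          + ((1 + q) * |h| ^ q * (∑ j, y j)) + (-(∑ j, F N (y j)))
          + (-((1 + q) * (∑ j, |y j| ^ q) * h)) := by ring
    rw [hXsplit]
    have hKnn : (0:ℝ) ≤ (1 + q) * (J:ℝ) ^ q + (1 + q) + 1 + (1 + q) := by
      have := Real.rpow_nonneg hJnonneg q
      nlinarith [hq0.le]
    have hKC : (1 + q) * (J:ℝ) ^ q + (1 + q) + 1 + (1 + q) ≤ 64 * ((J:ℝ) + 1) := by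
      have hJ1 : (1:ℝ) ≤ (J:ℝ) := by exact_mod_cast hJ
      nlinarith [hJq, hq1, hq0.le, hJnonneg]
    apply hCS _ hKnn hKC
    calc |(F N (h + ∑ j, y j) - F N h - (1 + q) * |h| ^ q * (∑ j, y j))
          + ((1 + q) * |h| ^ q * (∑ j, y j)) + (-(∑ j, F N (y j)))
          + (-((1 + q) * (∑ j, |y j| ^ q) * h))|
        ≤ |F N (h + ∑ j, y j) - F N h - (1 + q) * |h| ^ q * (∑ j, y j)|
          + |(1 + q) * |h| ^ q * (∑ j, y j)| + |∑ j, F N (y j)|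
          + |(1 + q) * (∑ j, |y j| ^ q) * h| := by
          have := tri (F N (h + ∑ j, y j) - F N h - (1 + q) * |h| ^ q * (∑ j, y j))
            ((1 + q) * |h| ^ q * (∑ j, y j)) (-(∑ j, F N (y j)))
            (-((1 + q) * (∑ j, |y j| ^ q) * h))
          rwa [abs_neg, abs_neg] at this
      _ ≤ (1 + q) * ((J:ℝ) ^ q * ∑ j, (|h| ^ q * |y j|))
          + (1 + q) * (|h| ^ q * ∑ j, |y j|) + (∑ j, (|y j| ^ q * |y j|))
          + (1 + q) * ((∑ j, |y j| ^ q) * |h|) := by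
          gcongr
          · calc |F N (h + ∑ j, y j) - F N h - (1 + q) * |h| ^ q * (∑ j, y j)|
                ≤ (1 + q) * |∑ j, y j| ^ (1 + q) := by
                  rw [hFq, hFq]; exact hTay
              _ ≤ (1 + q) * ((J:ℝ) ^ q * ∑ j, (|h| ^ q * |y j|)) := by
                  apply mul_le_mul_of_nonneg_left hYq (by linarith)
          · rw [abs_mul, abs_mul, abs_of_nonneg (by linarith : (0:ℝ) ≤ 1 + q),
              abs_of_nonneg (Real.rpow_nonneg (abs_nonneg h) q), mul_assoc]
            apply mul_le_mul_of_nonneg_left _ (by linarith : (0:ℝ) ≤ 1 + q)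
            exact mul_le_mul_of_nonneg_left hYabs (Real.rpow_nonneg (abs_nonneg h) q)
          · calc |∑ j, F N (y j)| ≤ ∑ j, |F N (y j)| := Finset.abs_sum_le_sum_abs _ _
              _ = ∑ j, (|y j| ^ q * |y j|) := by
                  exact Finset.sum_congr rfl fun j _ => habsF (y j)
          · rw [abs_mul, abs_mul, abs_of_nonneg (by linarith : (0:ℝ) ≤ 1 + q),
              abs_of_nonneg (Finset.sum_nonneg fun j _ => Real.rpow_nonneg (abs_nonneg _) q),
              mul_assoc]
      _ ≤ (1 + q) * ((J:ℝ) ^ q * ∑ j, t j)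
          + (1 + q) * (∑ j, t j) + (∑ j, t j)
          + (1 + q) * (∑ j, t j) := by
          have b1 : ∑ j, (|h| ^ q * |y j|) ≤ ∑ j, t j := Finset.sum_le_sum fun j _ => t1 j
          have b2 : |h| ^ q * ∑ j, |y j| ≤ ∑ j, t j := by
            rw [Finset.mul_sum]; exact b1
          have b3 : ∑ j, (|y j| ^ q * |y j|) ≤ ∑ j, t j := Finset.sum_le_sum fun j _ => t2 j
          have b4 : (∑ j, |y j| ^ q) * |h| ≤ ∑ j, t j := by
            rw [Finset.sum_mul]; exact Finset.sum_le_sum fun j _ => t3 j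
          have hq' : (0:ℝ) ≤ 1 + q := by linarith
          refine add_le_add (add_le_add (add_le_add ?_ ?_) b3) ?_
          · exact mul_le_mul_of_nonneg_left
              (mul_le_mul_of_nonneg_left b1 (Real.rpow_nonneg hJnonneg q)) hq'
          · exact mul_le_mul_of_nonneg_left b2 hq'
          · exact mul_le_mul_of_nonneg_left b4 hq'
      _ = ((1 + q) * (J:ℝ) ^ q + (1 + q) + 1 + (1 + q)) * S2 := by rw [htsum]; ring
  · -- CASE 2 : h dominated by the largest bubble
    have hq' : (0:ℝ) ≤ 1 + q := by linarith
    set E := (univ : Finset (Fin J)).erase j₀ with hEdef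
    set m : Fin J → ℝ := fun j => min (|y j₀| ^ q * |y j|) (|y j| ^ q * |y j₀|) with hmdef
    have hmnn : ∀ j, 0 ≤ m j := by
      intro j
      simp only [hmdef]
      exact le_min (by positivity) (by positivity)
    set M' : ℝ := ∑ j ∈ E, m j with hM'def
    have hM'nn : 0 ≤ M' := Finset.sum_nonneg fun j _ => hmnn j
    set T' : ℝ := ∑ j ∈ E, t j with hT'def
    have hT'nn : 0 ≤ T' := Finset.sum_nonneg fun j _ => htnonneg j
    have hst : t j₀ + T' = S2 := by
      rw [hT'def, ← htsum, hEdef]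
      exact Finset.add_sum_erase _ t (mem_univ j₀)
    -- sum splittings
    have hsY : ∑ j, y j = y j₀ + ∑ j ∈ E, y j := (Finset.add_sum_erase _ y (mem_univ j₀)).symm
    have hsF : ∑ j, F N (y j) = F N (y j₀) + ∑ j ∈ E, F N (y j) :=
      (Finset.add_sum_erase _ (fun j => F N (y j)) (mem_univ j₀)).symm
    have hsq : ∑ j, |y j| ^ q = |y j₀| ^ q + ∑ j ∈ E, |y j| ^ q :=
      (Finset.add_sum_erase _ (fun j => |y j| ^ q) (mem_univ j₀)).symm
    set B : ℝ := h + ∑ j ∈ E, y j with hBdef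
    have harg : h + ∑ j, y j = y j₀ + B := by rw [hBdef, hsY]; ring
    -- Taylor expansion around the largest bubble
    have hTay := taylor_absq hq0 hq1 (y j₀ + B) (y j₀)
    rw [add_sub_cancel_left] at hTay
    -- pointwise bounds
    have i1 : ∀ j, |y j₀| ^ q * |y j| ≤ m j := by
      intro j
      simp only [hmdef]
      refine le_min le_rfl ?_
      have hw := weight_shift (Z := |y j|) (H := |y j₀|) (a := 1) (c := q) (b := q) (d := 1)
        (abs_nonneg _) (hjmax j) hq0.le hq1 hq0.le (by ring)
      calc |y j₀| ^ q * |y j| = |y j| ^ (1:ℝ) * |y j₀| ^ q := by rw [Real.rpow_one]; ring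
        _ ≤ |y j| ^ q * |y j₀| ^ (1:ℝ) := hw
        _ = |y j| ^ q * |y j₀| := by rw [Real.rpow_one]
    have i2 : ∀ j, |y j| ^ q * |y j| ≤ m j := by
      intro j
      simp only [hmdef]
      refine le_min ?_ ?_
      · exact mul_le_mul_of_nonneg_right
          (Real.rpow_le_rpow (abs_nonneg _) (hjmax j) hq0.le) (abs_nonneg _)
      · exact mul_le_mul_of_nonneg_left (hjmax j) (Real.rpow_nonneg (abs_nonneg _) q)
    have i3 : ∀ j, |y j| ^ q * |h| ≤ m j + t j := by
      intro j
      rcases le_total (|y j|) (|h|) with hyh' | hhy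
      · have hb : |y j| ^ q * |h| ≤ t j := by
          have hw := weight_shift (Z := |y j|) (H := |h|) (a := q) (c := r) (b := 1) (d := e)
            (abs_nonneg _) hyh' hr0.le hrq (by norm_num) (by rw [hedef]; ring)
          calc |y j| ^ q * |h| = |y j| ^ q * |h| ^ (1:ℝ) := by rw [Real.rpow_one]
            _ ≤ |y j| ^ r * |h| ^ e := hw
            _ = t j := by rw [htdef]; ring
        linarith [hmnn j]
      · have hb : |y j| ^ q * |h| ≤ m j := by
          refine le_trans ?_ (i2 j)
          exact mul_le_mul_of_nonneg_left hhy (Real.rpow_nonneg (abs_nonneg _) q)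
        linarith [htnonneg j]
    have i4 : |h| ^ q * |h| ≤ t j₀ := by
      have hw := weight_shift (Z := |h|) (H := |y j₀|) (a := 1 + q) (c := e) (b := 0) (d := r)
        (abs_nonneg _) hcase he0.le (by rw [hedef]; linarith) le_rfl (by rw [hedef]; ring)
      calc |h| ^ q * |h| = |h| ^ (1 + q) * |y j₀| ^ (0:ℝ) := by
            rw [hsplit1 _ (abs_nonneg _), Real.rpow_zero, mul_one]
        _ ≤ |h| ^ e * |y j₀| ^ r := hw
        _ = t j₀ := by rw [htdef]
    -- bound on |B|^(1+q)
    have hEsum_nn : (0:ℝ) ≤ ∑ j ∈ E, |y j| := Finset.sum_nonneg fun j _ => abs_nonneg _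
    have hEsum_le : ∑ j ∈ E, |y j| ≤ (J:ℝ) * |y j₀| := by
      calc ∑ j ∈ E, |y j| ≤ ∑ _j ∈ E, |y j₀| := Finset.sum_le_sum fun j _ => hjmax j
        _ = (E.card : ℝ) * |y j₀| := by rw [Finset.sum_const, nsmul_eq_mul]
        _ ≤ (J:ℝ) * |y j₀| := by
            apply mul_le_mul_of_nonneg_right _ (abs_nonneg _)
            have h1 : E.card ≤ J := by
              rw [hEdef]
              calc (univ.erase j₀).card ≤ (univ : Finset (Fin J)).card :=
                    Finset.card_le_card (Finset.erase_subset _ _)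
                _ = J := by rw [Finset.card_univ, Fintype.card_fin]
            exact_mod_cast h1
    have hBabs : |B| ≤ |h| + ∑ j ∈ E, |y j| := by
      rw [hBdef]
      refine (abs_add_le _ _).trans ?_
      gcongr
      exact Finset.abs_sum_le_sum_abs _ _
    have hB1q : |B| ^ (1 + q) ≤ 2 ^ (1 + q) * (t j₀ + (J:ℝ) ^ q * M') := by
      calc |B| ^ (1 + q) ≤ (|h| + ∑ j ∈ E, |y j|) ^ (1 + q) :=
            Real.rpow_le_rpow (abs_nonneg _) hBabs (by linarith)
        _ ≤ 2 ^ (1 + q) * (|h| ^ (1 + q) + (∑ j ∈ E, |y j|) ^ (1 + q)) :=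
            two_rpow_bound (abs_nonneg h) hEsum_nn (by linarith)
        _ ≤ 2 ^ (1 + q) * (t j₀ + (J:ℝ) ^ q * M') := by
            apply mul_le_mul_of_nonneg_left _ (Real.rpow_nonneg (by norm_num) _)
            apply add_le_add
            · rw [← hsplit1 _ (abs_nonneg h)]; exact i4
            · calc (∑ j ∈ E, |y j|) ^ (1 + q)
                  = (∑ j ∈ E, |y j|) ^ q * ∑ j ∈ E, |y j| := (hsplit1 _ hEsum_nn).symm
                _ ≤ ((J:ℝ) * |y j₀|) ^ q * ∑ j ∈ E, |y j| :=
                    mul_le_mul_of_nonneg_right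
                      (Real.rpow_le_rpow hEsum_nn hEsum_le hq0.le) hEsum_nn
                _ = (J:ℝ) ^ q * (|y j₀| ^ q * ∑ j ∈ E, |y j|) := by
                    rw [Real.mul_rpow hJnonneg (abs_nonneg _)]; ring
                _ = (J:ℝ) ^ q * ∑ j ∈ E, (|y j₀| ^ q * |y j|) := by rw [Finset.mul_sum]
                _ ≤ (J:ℝ) ^ q * M' := by
                    apply mul_le_mul_of_nonneg_left _ (Real.rpow_nonneg hJnonneg q)
                    exact Finset.sum_le_sum fun j _ => i1 j
    -- the pair sum dominates ∑_E m
    have hM'S1 : M' ≤ S1 := by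
      rw [hM'def, hS1def]
      set ι : Fin J → Fin J × Fin J := fun j => if j₀ < j then (j₀, j) else (j, j₀) with hι
      have hinjE : ∀ x ∈ E, ∀ z ∈ E, ι x = ι z → x = z := by
        intro x hx z hz hxz
        have hx' : x ≠ j₀ := Finset.ne_of_mem_erase (hEdef ▸ hx)
        have hz' : z ≠ j₀ := Finset.ne_of_mem_erase (hEdef ▸ hz)
        by_cases h1 : j₀ < x <;> by_cases h2 : j₀ < z
        · simp only [hι, if_pos h1, if_pos h2, Prod.mk.injEq] at hxz
          exact hxz.2
        · simp only [hι, if_pos h1, if_neg h2, Prod.mk.injEq] at hxz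
          exact absurd hxz.2 hx'
        · simp only [hι, if_neg h1, if_pos h2, Prod.mk.injEq] at hxz
          exact absurd hxz.1 hx'
        · simp only [hι, if_neg h1, if_neg h2, Prod.mk.injEq] at hxz
          exact hxz.1
      have hsub : E.image ι ⊆ Finset.univ.filter (fun p : Fin J × Fin J => p.1 < p.2) := by
        intro p hp
        rw [Finset.mem_image] at hp
        obtain ⟨j, hj, rfl⟩ := hp
        rw [Finset.mem_filter]
        refine ⟨Finset.mem_univ _, ?_⟩
        by_cases hlt : j₀ < j
        · simp only [hι, if_pos hlt]; exact hlt
        · simp only [hι, if_neg hlt]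
          exact lt_of_le_of_ne (not_lt.mp hlt) (Finset.ne_of_mem_erase (hEdef ▸ hj))
      have hval : ∀ j ∈ E,
          min (|y (ι j).1| ^ q * |y (ι j).2|) (|y (ι j).2| ^ q * |y (ι j).1|) = m j := by
        intro j hj
        by_cases hlt : j₀ < j
        · simp only [hmdef, hι, if_pos hlt]
        · simp only [hmdef, hι, if_neg hlt]
          exact min_comm _ _
      calc ∑ j ∈ E, m j
          = ∑ j ∈ E, min (|y (ι j).1| ^ q * |y (ι j).2|) (|y (ι j).2| ^ q * |y (ι j).1|) :=
            (Finset.sum_congr rfl hval).symm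
        _ = ∑ p ∈ E.image ι, min (|y p.1| ^ q * |y p.2|) (|y p.2| ^ q * |y p.1|) :=
            (Finset.sum_image (g := ι)
              (f := fun p : Fin J × Fin J => min (|y p.1| ^ q * |y p.2|) (|y p.2| ^ q * |y p.1|))
              hinjE).symm
        _ ≤ ∑ p ∈ Finset.univ.filter (fun p : Fin J × Fin J => p.1 < p.2),
              min (|y p.1| ^ q * |y p.2|) (|y p.2| ^ q * |y p.1|) :=
            Finset.sum_le_sum_of_subset_of_nonneg hsub
              (fun p _ _ => le_min (by positivity) (by positivity))
    -- decompose the main expression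
    rw [harg]
    have hXsplit2 : F N (y j₀ + B) - (∑ j, F N (y j)) - (1 + q) * (∑ j, |y j| ^ q) * h - F N h
        = (F N (y j₀ + B) - F N (y j₀) - (1 + q) * |y j₀| ^ q * B)
          + ((1 + q) * |y j₀| ^ q * (∑ j ∈ E, y j))
          + (-(∑ j ∈ E, F N (y j)))
          + (-((1 + q) * (∑ j ∈ E, |y j| ^ q) * h))
          + (-(F N h)) := by
      rw [hsF, hsq, hBdef]; ring
    rw [hXsplit2]
    have tri5 : ∀ a b c d f : ℝ, |a + b + c + d + f| ≤ |a| + |b| + |c| + |d| + |f| := by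
      intro a b c d f
      calc |a + b + c + d + f| ≤ |a + b + c + d| + |f| := abs_add_le _ _
        _ ≤ (|a + b + c| + |d|) + |f| := by gcongr; exact abs_add_le _ _
        _ ≤ ((|a + b| + |c|) + |d|) + |f| := by gcongr; exact abs_add_le _ _
        _ ≤ (((|a| + |b|) + |c|) + |d|) + |f| := by gcongr; exact abs_add_le _ _
    -- the five termwise bounds
    have T1 : |F N (y j₀ + B) - F N (y j₀) - (1 + q) * |y j₀| ^ q * B|
        ≤ (1 + q) * (2 ^ (1 + q) * (t j₀ + (J:ℝ) ^ q * M')) := by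
      calc |F N (y j₀ + B) - F N (y j₀) - (1 + q) * |y j₀| ^ q * B|
          ≤ (1 + q) * |B| ^ (1 + q) := by
            simp only [hFq]; exact hTay
        _ ≤ (1 + q) * (2 ^ (1 + q) * (t j₀ + (J:ℝ) ^ q * M')) :=
            mul_le_mul_of_nonneg_left hB1q hq'
    have T2 : |(1 + q) * |y j₀| ^ q * (∑ j ∈ E, y j)| ≤ (1 + q) * M' := by
      rw [abs_mul, abs_mul, abs_of_nonneg hq',
        abs_of_nonneg (Real.rpow_nonneg (abs_nonneg _) q), mul_assoc]
      apply mul_le_mul_of_nonneg_left _ hq'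
      calc |y j₀| ^ q * |∑ j ∈ E, y j| ≤ |y j₀| ^ q * ∑ j ∈ E, |y j| :=
            mul_le_mul_of_nonneg_left (Finset.abs_sum_le_sum_abs _ _)
              (Real.rpow_nonneg (abs_nonneg _) q)
        _ = ∑ j ∈ E, (|y j₀| ^ q * |y j|) := by rw [Finset.mul_sum]
        _ ≤ M' := Finset.sum_le_sum fun j _ => i1 j
    have T3 : |∑ j ∈ E, F N (y j)| ≤ M' := by
      calc |∑ j ∈ E, F N (y j)| ≤ ∑ j ∈ E, |F N (y j)| := Finset.abs_sum_le_sum_abs _ _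
        _ = ∑ j ∈ E, (|y j| ^ q * |y j|) := Finset.sum_congr rfl fun j _ => habsF (y j)
        _ ≤ M' := Finset.sum_le_sum fun j _ => i2 j
    have T4 : |(1 + q) * (∑ j ∈ E, |y j| ^ q) * h| ≤ (1 + q) * (M' + T') := by
      rw [abs_mul, abs_mul, abs_of_nonneg hq',
        abs_of_nonneg (Finset.sum_nonneg fun j _ => Real.rpow_nonneg (abs_nonneg _) q),
        mul_assoc]
      apply mul_le_mul_of_nonneg_left _ hq'
      calc (∑ j ∈ E, |y j| ^ q) * |h| = ∑ j ∈ E, (|y j| ^ q * |h|) := Finset.sum_mul _ _ _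
        _ ≤ ∑ j ∈ E, (m j + t j) := Finset.sum_le_sum fun j _ => i3 j
        _ = M' + T' := Finset.sum_add_distrib
    have T5 : |F N h| ≤ t j₀ := by rw [habsF]; exact i4
    -- constants
    have h2q : (2:ℝ) ^ (1 + q) ≤ 4 := by
      calc (2:ℝ) ^ (1 + q) ≤ (2:ℝ) ^ (2:ℝ) :=
            Real.rpow_le_rpow_of_exponent_le one_le_two (by linarith)
        _ = (2:ℝ) ^ ((2:ℕ):ℝ) := by norm_num
        _ = (2:ℝ) ^ (2:ℕ) := Real.rpow_natCast 2 2
        _ = 4 := by norm_num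
    have h2qnn : (0:ℝ) ≤ (2:ℝ) ^ (1 + q) := Real.rpow_nonneg (by norm_num) _
    have hJ1 : (1:ℝ) ≤ (J:ℝ) := by exact_mod_cast hJ
    have w1 : (1 + q) * 2 ^ (1 + q) ≤ 8 := by
      have := mul_le_mul (show (1:ℝ) + q ≤ 2 by linarith only [hq1]) h2q h2qnn
        (by norm_num : (0:ℝ) ≤ 2)
      linarith only [this]
    have w2 : (1 + q) * 2 ^ (1 + q) * (J:ℝ) ^ q ≤ 8 * (J:ℝ) :=
      le_trans (mul_le_mul_of_nonneg_right w1 (Real.rpow_nonneg hJnonneg q)) (by linarith [hJq])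
    set C : ℝ := 64 * ((J:ℝ) + 1) with hCdef
    have hCnn : (0:ℝ) ≤ C := by rw [hCdef]; positivity
    have hKM : (1 + q) * 2 ^ (1 + q) * (J:ℝ) ^ q + (1 + q) + 1 + (1 + q) ≤ C := by
      rw [hCdef]; linarith only [w2, hq1, hJ1]
    have hKS : (1 + q) * 2 ^ (1 + q) + 1 ≤ C := by rw [hCdef]; linarith only [w1, hJ1]
    have hKT : (1 + q) ≤ C := by rw [hCdef]; linarith only [hq1, hJ1]
    calc |(F N (y j₀ + B) - F N (y j₀) - (1 + q) * |y j₀| ^ q * B)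
          + ((1 + q) * |y j₀| ^ q * (∑ j ∈ E, y j))
          + (-(∑ j ∈ E, F N (y j)))
          + (-((1 + q) * (∑ j ∈ E, |y j| ^ q) * h))
          + (-(F N h))|
        ≤ |F N (y j₀ + B) - F N (y j₀) - (1 + q) * |y j₀| ^ q * B|
          + |(1 + q) * |y j₀| ^ q * (∑ j ∈ E, y j)|
          + |∑ j ∈ E, F N (y j)|
          + |(1 + q) * (∑ j ∈ E, |y j| ^ q) * h|
          + |F N h| := by
          have := tri5 (F N (y j₀ + B) - F N (y j₀) - (1 + q) * |y j₀| ^ q * B)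
            ((1 + q) * |y j₀| ^ q * (∑ j ∈ E, y j))
            (-(∑ j ∈ E, F N (y j)))
            (-((1 + q) * (∑ j ∈ E, |y j| ^ q) * h))
            (-(F N h))
          rwa [abs_neg, abs_neg, abs_neg] at this
      _ ≤ (1 + q) * (2 ^ (1 + q) * (t j₀ + (J:ℝ) ^ q * M'))
          + (1 + q) * M' + M' + (1 + q) * (M' + T') + t j₀ :=
          add_le_add (add_le_add (add_le_add (add_le_add T1 T2) T3) T4) T5
      _ = ((1 + q) * 2 ^ (1 + q) * (J:ℝ) ^ q + (1 + q) + 1 + (1 + q)) * M'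
          + ((1 + q) * 2 ^ (1 + q) + 1) * t j₀ + (1 + q) * T' := by ring
      _ ≤ C * S1 + C * t j₀ + C * T' := by
          refine add_le_add (add_le_add ?_ ?_) ?_
          · exact le_trans (mul_le_mul_of_nonneg_right hKM hM'nn)
              (mul_le_mul_of_nonneg_left hM'S1 hCnn)
          · exact mul_le_mul_of_nonneg_right hKS (htnonneg j₀)
          · exact mul_le_mul_of_nonneg_right hKT hT'nn
      _ = C * (S1 + S2) := by rw [← hst]; ring
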